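/- Let G be a finite group with a shift structure ({X_j}, Y_0, φ) of depth ℓ, and let N := X_0 ∩ Y_0 (a normal subgroup of G). Then the quotient group G/N has a shift structure of depth ℓ whose chain consists of the images of the X_j under the projection π : G → G/N, whose distinguished normal subgroup is π(Y_0), and whose isomorphism is the one induced by φ via the canonical identifications (G/N)/π(Y_0) ≅ G/Y_0 and (G/N)/π(X_0) ≅ G/X_0; moreover this shift structure is reduced, i.e., π(X_0) ∩ π(Y_0) = 1. Hence every shift group with |X_0 ∩ Y_0| > 1 is an extension of X_0 ∩ Y_0 by a shift group with trivial intersection. -/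

import Mathlib

/-- A finite group `G` has a *shift structure* `({X_j}, Y₀, φ)` of depth `ℓ ≥ 1`
(indices shifted by one, so `X j` here is the paper's `X_{j-1}`). -/
structure IsShiftStructure {G : Type*} [Group G] [Finite G] (ℓ : ℕ)
    (X : ℕ → Subgroup G) (Y0 : Subgroup G) [Y0.Normal] [(X 1).Normal]
    (φ : (G ⧸ Y0) ≃* (G ⧸ X 1)) : Prop where
  one_le : 1 ≤ ℓ
  bot_eq : X 0 = ⊥
  top_eq : X (ℓ + 1) = ⊤
  mono : ∀ j, X j ≤ X (j + 1)
  norm : ∀ j, (X j).Normal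
  compat : ∀ j ≤ ℓ,
    Subgroup.map φ.toMonoidHom (Subgroup.map (QuotientGroup.mk' Y0) (X j ⊔ Y0)) =
      Subgroup.map (QuotientGroup.mk' (X 1)) (X (j + 1))

/-- Conclusion of STATEMENT 14: writing `N = X_0 ∩ Y_0` and `π : G → G/N` for the
projection, the quotient `G/N` carries a shift structure of depth `ℓ` with chain
`π(X j)`, normal subgroup `π(Y_0)`, and isomorphism `ψ` induced by `φ` (i.e. whenever
`φ(g Y_0) = g' X_0` one has `ψ(π(g) π(Y_0)) = π(g') π(X_0)`); moreover it is reduced: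
`π(X_0) ∩ π(Y_0) = 1`. -/
def QuotientShiftConcl {G : Type*} [Group G] [Finite G] (ℓ : ℕ)
    (X : ℕ → Subgroup G) (Y0 : Subgroup G) [hY : Y0.Normal] [hX : (X 1).Normal]
    (φ : (G ⧸ Y0) ≃* (G ⧸ X 1)) (hN : (X 1 ⊓ Y0).Normal) : Prop :=
  letI := hN
  haveI h1 : (Subgroup.map (QuotientGroup.mk' (X 1 ⊓ Y0)) Y0).Normal :=
    hY.map _ (QuotientGroup.mk'_surjective _)
  haveI h2 : (Subgroup.map (QuotientGroup.mk' (X 1 ⊓ Y0)) (X 1)).Normal :=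
    hX.map _ (QuotientGroup.mk'_surjective _)
  Subgroup.map (QuotientGroup.mk' (X 1 ⊓ Y0)) (X 1) ⊓
      Subgroup.map (QuotientGroup.mk' (X 1 ⊓ Y0)) Y0 = ⊥ ∧
  ∃ ψ : ((G ⧸ (X 1 ⊓ Y0)) ⧸ Subgroup.map (QuotientGroup.mk' (X 1 ⊓ Y0)) Y0) ≃*
        ((G ⧸ (X 1 ⊓ Y0)) ⧸ Subgroup.map (QuotientGroup.mk' (X 1 ⊓ Y0)) (X 1)),
    (∀ g g' : G, φ (QuotientGroup.mk g) = (QuotientGroup.mk g' : G ⧸ X 1) →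
      ψ (QuotientGroup.mk (QuotientGroup.mk' (X 1 ⊓ Y0) g)) =
        QuotientGroup.mk (QuotientGroup.mk' (X 1 ⊓ Y0) g')) ∧
    IsShiftStructure ℓ (fun j => Subgroup.map (QuotientGroup.mk' (X 1 ⊓ Y0)) (X j))
      (Subgroup.map (QuotientGroup.mk' (X 1 ⊓ Y0)) Y0) ψ

/-- for `N = X_0 ∩ Y_0` (a normal subgroup of `G`), the quotient `G/N`
has a reduced shift structure of depth `ℓ` induced by the one of `G`. -/
theorem shift_structure_reduction {G : Type*} [Group G] [Finite G] (ℓ : ℕ)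
    (X : ℕ → Subgroup G) (Y0 : Subgroup G) [Y0.Normal] [(X 1).Normal]
    (φ : (G ⧸ Y0) ≃* (G ⧸ X 1)) (h : IsShiftStructure ℓ X Y0 φ) :
    ∃ hN : (X 1 ⊓ Y0).Normal, QuotientShiftConcl ℓ X Y0 φ hN := by
  set N : Subgroup G := X 1 ⊓ Y0 with hNdef
  haveI hN : N.Normal := inferInstance
  refine ⟨hN, ?_, ?_⟩
  · -- reduced
    refine le_antisymm ?_ bot_le
    rintro x ⟨⟨a, ha, rfl⟩, b, hb, hba⟩
    have hmem : a⁻¹ * b ∈ N := by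
      rw [← QuotientGroup.eq]
      exact hba.symm
    have haY : a ∈ Y0 := by
      have : a⁻¹ * b ∈ Y0 := hmem.2
      have := mul_mem this (inv_mem hb)
      simpa [mul_assoc] using inv_mem this
    have : a ∈ N := ⟨ha, haY⟩
    simpa [QuotientGroup.eq_one_iff, hNdef] using this
  · -- the isomorphism
    have hNY : N ≤ Y0 := inf_le_right
    have hNX : N ≤ X 1 := inf_le_left
    let e1 := QuotientGroup.quotientQuotientEquivQuotient N Y0 hNY
    let e2 := QuotientGroup.quotientQuotientEquivQuotient N (X 1) hNX
    refine ⟨e1.trans (φ.trans e2.symm), ?_, ?_⟩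
    · intro g g' hgg'
      have h1 : e1 ((QuotientGroup.mk (QuotientGroup.mk' N g))) = QuotientGroup.mk g :=
        QuotientGroup.quotientQuotientEquivQuotientAux_mk_mk N Y0 hNY g
      have h2 : e2 ((QuotientGroup.mk (QuotientGroup.mk' N g'))) = QuotientGroup.mk g' :=
        QuotientGroup.quotientQuotientEquivQuotientAux_mk_mk N (X 1) hNX g'
      change (e1.trans (φ.trans e2.symm)) (QuotientGroup.mk (QuotientGroup.mk' N g)) =
        QuotientGroup.mk (QuotientGroup.mk' N g')
      simp only [MulEquiv.trans_apply, h1, hgg', ← h2, MulEquiv.symm_apply_apply]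
    · have key1 : (e1.toMonoidHom.comp ((QuotientGroup.mk' (Subgroup.map (QuotientGroup.mk' N) Y0)).comp (QuotientGroup.mk' N))) = QuotientGroup.mk' Y0 := by
        ext g
        exact QuotientGroup.quotientQuotientEquivQuotientAux_mk_mk N Y0 hNY g
      have key2 : (e2.toMonoidHom.comp ((QuotientGroup.mk' (Subgroup.map (QuotientGroup.mk' N) (X 1))).comp (QuotientGroup.mk' N))) = QuotientGroup.mk' (X 1) := by
        ext g
        exact QuotientGroup.quotientQuotientEquivQuotientAux_mk_mk N (X 1) hNX g
      refine { one_le := h.one_le, bot_eq := ?_, top_eq := ?_, mono := ?_,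
               norm := ?_, compat := ?_ }
      · simp [h.bot_eq]
      · rw [h.top_eq]
        exact Subgroup.map_top_of_surjective _ (QuotientGroup.mk'_surjective N)
      · intro j
        exact Subgroup.map_mono (h.mono j)
      · intro j
        exact (h.norm j).map _ (QuotientGroup.mk'_surjective N)
      · intro j hj
        have hsup : Subgroup.map (QuotientGroup.mk' N) (X j) ⊔ Subgroup.map (QuotientGroup.mk' N) Y0
            = Subgroup.map (QuotientGroup.mk' N) (X j ⊔ Y0) :=
          (Subgroup.map_sup _ _ _).symm
        have hcomp1 : (e1.trans (φ.trans e2.symm)).toMonoidHom.comp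
            ((QuotientGroup.mk' (Subgroup.map (QuotientGroup.mk' N) Y0)).comp (QuotientGroup.mk' N)) =
            e2.symm.toMonoidHom.comp (φ.toMonoidHom.comp (QuotientGroup.mk' Y0)) := by
          ext g
          have := QuotientGroup.quotientQuotientEquivQuotientAux_mk_mk N Y0 hNY g
          simp only [MonoidHom.comp_apply, MulEquiv.toMonoidHom_eq_coe,
            MonoidHom.coe_coe, MulEquiv.trans_apply]
          rw [show e1 ((QuotientGroup.mk' (Subgroup.map (QuotientGroup.mk' N) Y0))
            ((QuotientGroup.mk' N) g)) = QuotientGroup.mk g from this]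
          rfl
        have hcomp2 : (QuotientGroup.mk' (Subgroup.map (QuotientGroup.mk' N) (X 1))).comp
            (QuotientGroup.mk' N) = e2.symm.toMonoidHom.comp (QuotientGroup.mk' (X 1)) := by
          ext g
          have h2 : e2 ((QuotientGroup.mk' (Subgroup.map (QuotientGroup.mk' N) (X 1)))
              ((QuotientGroup.mk' N) g)) = QuotientGroup.mk g :=
            QuotientGroup.quotientQuotientEquivQuotientAux_mk_mk N (X 1) hNX g
          simp only [MonoidHom.comp_apply, MulEquiv.toMonoidHom_eq_coe, MonoidHom.coe_coe,
            QuotientGroup.mk'_apply]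
          rw [← h2, MulEquiv.symm_apply_apply]
          rfl
        rw [hsup]
        simp only [Subgroup.map_map]
        rw [hcomp1, hcomp2]
        simp only [← Subgroup.map_map]
        rw [h.compat j hj]
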